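/- For every integer t ≥ 2 there exists n₀ ∈ ℕ such that for all integers n > n₀, IR(K_{t,t}, K_{1,n}) ≤ n + 10·n^{1 − 1/(2t)}. -/

import Mathlib

open SimpleGraph

def ArrowsInd {V α β : Type*} (F : SimpleGraph V) (H : SimpleGraph α) (G : SimpleGraph β) : Prop :=
  ∀ c : Sym2 V → Bool,
    (∃ f : H ↪g F, ∀ u v, H.Adj u v → c s(f u, f v) = true) ∨
    (∃ g : G ↪g F, ∀ u v, G.Adj u v → c s(g u, g v) = false)

noncomputable def IR {α β : Type*} (H : SimpleGraph α) (G : SimpleGraph β) : ℕ :=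
  sInf {N : ℕ | ∃ F : SimpleGraph (Fin N), ArrowsInd F H G}

def StarGraph (n : ℕ) : SimpleGraph (Fin 1 ⊕ Fin n) := completeBipartiteGraph (Fin 1) (Fin n)

open Finset


lemma choose_add_le (t x k : ℕ) :
    (x + k).choose (t+1) ≤ x.choose (t+1) + k * (x + k - 1).choose t := by
  induction k with
  | zero => simp
  | succ k ih =>
    have h1 : (x + (k+1)).choose (t+1) = (x+k).choose t + (x+k).choose (t+1) := by
      rw [show x + (k+1) = (x+k) + 1 by ring, Nat.choose_succ_succ']
    have h2 : (x + k - 1).choose t ≤ (x + k).choose t :=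
      Nat.choose_le_choose _ (by omega)
    have h3 : x + (k+1) - 1 = x + k := by omega
    rw [h1, h3]
    calc (x+k).choose t + (x+k).choose (t+1)
        ≤ (x+k).choose t + (x.choose (t+1) + k * (x + k - 1).choose t) :=
          Nat.add_le_add_left ih _
      _ ≤ (x+k).choose t + (x.choose (t+1) + k * (x + k).choose t) := by
          exact Nat.add_le_add_left (Nat.add_le_add_left (Nat.mul_le_mul_left k h2) _) _
      _ = x.choose (t+1) + (k+1) * (x + k).choose t := by ring

lemma le_choose_add (t x k : ℕ) :
    x.choose (t+1) + k * x.choose t ≤ (x + k).choose (t+1) := by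
  induction k with
  | zero => simp
  | succ k ih =>
    have h1 : (x + (k+1)).choose (t+1) = (x+k).choose t + (x+k).choose (t+1) := by
      rw [show x + (k+1) = (x+k) + 1 by ring, Nat.choose_succ_succ']
    have h2 : x.choose t ≤ (x + k).choose t :=
      Nat.choose_le_choose _ (by omega)
    rw [h1]
    calc x.choose (t+1) + (k+1) * x.choose t
        = (x.choose (t+1) + k * x.choose t) + x.choose t := by ring
      _ ≤ (x+k).choose (t+1) + (x+k).choose t := Nat.add_le_add ih h2
      _ = (x+k).choose t + (x+k).choose (t+1) := by ring

lemma choose_slope (t a d : ℕ) (ht : 1 ≤ t) :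
    a.choose t + (a-1).choose (t-1) * d ≤ d.choose t + (a-1).choose (t-1) * a := by
  obtain ⟨t, rfl⟩ : ∃ t', t = t' + 1 := ⟨t-1, by omega⟩
  simp only [Nat.add_sub_cancel]
  rcases le_or_gt a d with h | h
  · obtain ⟨k, rfl⟩ : ∃ k, d = a + k := ⟨d - a, by omega⟩
    have h1 := le_choose_add t a k
    have h2 : (a-1).choose t ≤ a.choose t := Nat.choose_le_choose _ (by omega)
    calc a.choose (t+1) + (a-1).choose t * (a + k)
        = (a.choose (t+1) + (a-1).choose t * k) + (a-1).choose t * a := by ring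
      _ ≤ (a.choose (t+1) + k * a.choose t) + (a-1).choose t * a := by
          have : (a-1).choose t * k ≤ k * a.choose t := by
            rw [Nat.mul_comm]; exact Nat.mul_le_mul_left k h2
          omega
      _ ≤ (a+k).choose (t+1) + (a-1).choose t * a := Nat.add_le_add_right h1 _
  · obtain ⟨k, rfl⟩ : ∃ k, a = d + k := ⟨a - d, by omega⟩
    have h1 := choose_add_le t d k
    calc (d+k).choose (t+1) + (d+k-1).choose t * d
        ≤ (d.choose (t+1) + k * (d+k-1).choose t) + (d+k-1).choose t * d :=
          Nat.add_le_add_right h1 _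
      _ = d.choose (t+1) + (d+k-1).choose t * (d+k) := by ring

lemma count_lemma {α β : Type*} [Fintype α] [Fintype β] [DecidableEq α]
    (D : β → Finset α) (t : ℕ)
    (hno : ∀ T : Finset α, T.card = t → ({b | T ⊆ D b} : Finset β).card ≤ t - 1) :
    ∑ b, ((D b).card.choose t) ≤ (Fintype.card α).choose t * (t-1) := by
  classical
  have key : ∀ b, (D b).card.choose t
      = ∑ T ∈ Finset.univ.powersetCard t, if T ⊆ D b then 1 else 0 := by
    intro b
    rw [← Finset.card_filter]
    rw [← Finset.card_powersetCard]
    congr 1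
    ext T
    simp [Finset.mem_powersetCard, Finset.mem_filter]
    tauto
  calc ∑ b, ((D b).card.choose t)
      = ∑ b, ∑ T ∈ Finset.univ.powersetCard t, if T ⊆ D b then 1 else 0 := by
        simp_rw [key]
    _ = ∑ T ∈ Finset.univ.powersetCard t, ∑ b, if T ⊆ D b then 1 else 0 :=
        Finset.sum_comm
    _ ≤ ∑ T ∈ Finset.univ.powersetCard t, (t-1) := by
        apply Finset.sum_le_sum
        intro T hT
        rw [Finset.mem_powersetCard] at hT
        rw [← Finset.card_filter]
        exact hno T hT.2
    _ = (Fintype.card α).choose t * (t-1) := by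
        rw [Finset.sum_const, Finset.card_powersetCard, Finset.card_univ, smul_eq_mul]

lemma arrows_main (t K n : ℕ) (ht : 2 ≤ t)
    (hkey : (t-1) * K.choose t < (n + K) * ((K*(K+1))/(n+K)).choose t) :
    ArrowsInd (completeBipartiteGraph (Fin K) (Fin (n + K)))
      (completeBipartiteGraph (Fin t) (Fin t)) (StarGraph n) := by
  classical
  intro c
  by_cases hstar : ∃ p : Fin K,
      n ≤ ({q | c s(Sum.inl p, Sum.inr q) = false} : Finset (Fin (n + K))).card
  · right
    obtain ⟨p, hp⟩ := hstar
    obtain ⟨u, hu_sub, hu_card⟩ := Finset.exists_subset_card_eq hp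
    let g := u.orderIsoOfFin hu_card
    refine ⟨⟨⟨Sum.map (fun _ => p) (fun i => (g i : Fin (n + K))), ?_⟩, ?_⟩, ?_⟩
    · apply Function.Injective.sumMap
      · intro a b _; exact Subsingleton.elim a b
      · intro i j h
        exact g.injective (Subtype.ext h)
    · intro a b
      cases a <;> cases b <;>
        simp [StarGraph, completeBipartiteGraph]
    · intro a b hab
      cases a with
      | inl a => cases b with
        | inl b => simp [StarGraph, completeBipartiteGraph] at hab
        | inr b =>
          have h2 := hu_sub (g b).2
          simp only [Finset.mem_filter] at h2
          exact h2.2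
      | inr a => cases b with
        | inl b =>
          have h2 := hu_sub (g a).2
          simp only [Finset.mem_filter] at h2
          rw [Sym2.eq_swap]
          exact h2.2
        | inr b => simp [StarGraph, completeBipartiteGraph] at hab
  · left
    push_neg at hstar
    set D : Fin (n + K) → Finset (Fin K) :=
      fun q => {p | c s(Sum.inl p, Sum.inr q) = true} with hD
    set a := (K*(K+1))/(n+K) with ha
    have hsum : (n + K) * a ≤ ∑ q, (D q).card := by
      have h1 : ∑ q, (D q).card
          = ∑ p : Fin K, ({q | c s(Sum.inl p, Sum.inr q) = true} : Finset (Fin (n + K))).card := by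
        simp only [hD, Finset.card_filter]
        rw [Finset.sum_comm]
      have h2 : ∀ p : Fin K,
          K + 1 ≤ ({q | c s(Sum.inl p, Sum.inr q) = true} : Finset (Fin (n + K))).card := by
        intro p
        have hc : ({q | c s(Sum.inl p, Sum.inr q) = true} : Finset (Fin (n + K))).card
            + ({q | c s(Sum.inl p, Sum.inr q) = false} : Finset (Fin (n + K))).card = n + K := by
          have := Finset.card_filter_add_card_filter_not
            (s := (Finset.univ : Finset (Fin (n + K))))
            (p := fun q => c s(Sum.inl p, Sum.inr q) = true)
          simp only [Finset.card_univ, Fintype.card_fin, Bool.not_eq_true] at this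
          convert this using 3
        have hlt := hstar p
        omega
      have h3 : K * (K+1)
          ≤ ∑ p : Fin K, ({q | c s(Sum.inl p, Sum.inr q) = true} : Finset (Fin (n + K))).card := by
        calc K * (K+1) = ∑ _p : Fin K, (K+1) := by simp [Finset.sum_const, Finset.card_univ]
          _ ≤ _ := Finset.sum_le_sum (fun p _ => h2 p)
      have h4 : (n + K) * a ≤ K * (K+1) := by
        rw [ha, Nat.mul_comm]
        exact Nat.div_mul_le_self _ _
      omega
    have hbig : ∃ T : Finset (Fin K), T.card = t
        ∧ t ≤ ({q | T ⊆ D q} : Finset (Fin (n + K))).card := by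
      by_contra hno
      push_neg at hno
      have hno' : ∀ T : Finset (Fin K), T.card = t
          → ({q | T ⊆ D q} : Finset (Fin (n + K))).card ≤ t - 1 := by
        intro T hT
        have := hno T hT
        omega
      have hcount := count_lemma D t hno'
      rw [Fintype.card_fin] at hcount
      set s := (a-1).choose (t-1) with hs
      have hslope : ∑ q : Fin (n + K), (a.choose t + s * (D q).card)
          ≤ ∑ q : Fin (n + K), ((D q).card.choose t + s * a) :=
        Finset.sum_le_sum (fun q _ => choose_slope t a ((D q).card) (by omega))
      rw [Finset.sum_add_distrib, Finset.sum_add_distrib, ← Finset.mul_sum,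
        Finset.sum_const, Finset.sum_const, Finset.card_univ, Fintype.card_fin,
        smul_eq_mul, smul_eq_mul] at hslope
      have h5 : s * ((n + K) * a) ≤ s * ∑ q, (D q).card := Nat.mul_le_mul_left _ hsum
      have hcomm : (n + K) * (s * a) = s * ((n + K) * a) := by ring
      have hcomm2 : (t-1) * K.choose t = K.choose t * (t-1) := by ring
      omega
    obtain ⟨T, hT, hTcard⟩ := hbig
    obtain ⟨U, hU_sub, hU_card⟩ := Finset.exists_subset_card_eq hTcard
    let g₁ := T.orderIsoOfFin hT
    let g₂ := U.orderIsoOfFin hU_card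
    have hredTU : ∀ (i : Fin t) (j : Fin t),
        c s(Sum.inl (g₁ i : Fin K), Sum.inr (g₂ j : Fin (n + K))) = true := by
      intro i j
      have h2 := hU_sub (g₂ j).2
      simp only [Finset.mem_filter] at h2
      have h3 := h2.2 (g₁ i).2
      simp only [hD, Finset.mem_filter] at h3
      exact h3.2
    refine ⟨⟨⟨Sum.map (fun i => (g₁ i : Fin K)) (fun j => (g₂ j : Fin (n + K))), ?_⟩, ?_⟩, ?_⟩
    · apply Function.Injective.sumMap
      · intro i j h; exact g₁.injective (Subtype.ext h)
      · intro i j h; exact g₂.injective (Subtype.ext h)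
    · intro x y
      cases x <;> cases y <;> simp [completeBipartiteGraph]
    · intro x y hxy
      cases x with
      | inl x => cases y with
        | inl y => simp [completeBipartiteGraph] at hxy
        | inr y => exact hredTU x y
      | inr x => cases y with
        | inl y => rw [Sym2.eq_swap]; exact hredTU y x
        | inr y => simp [completeBipartiteGraph] at hxy

lemma IR_le_card {α β V : Type*} [Fintype V] (H : SimpleGraph α) (G : SimpleGraph β)
    (F : SimpleGraph V) (h : ArrowsInd F H G) : IR H G ≤ Fintype.card V := by
  apply Nat.sInf_le
  let e := Fintype.equivFin V
  refine ⟨F.map e.toEmbedding, ?_⟩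
  intro c
  rcases h (fun s2 => c (s2.map e)) with ⟨f, hf⟩ | ⟨f, hf⟩
  · refine Or.inl ⟨(SimpleGraph.Iso.map e F).toEmbedding.comp f, ?_⟩
    intro u v huv
    have := hf u v huv
    rwa [Sym2.map_pair_eq] at this
  · refine Or.inr ⟨(SimpleGraph.Iso.map e F).toEmbedding.comp f, ?_⟩
    intro u v huv
    have := hf u v huv
    rwa [Sym2.map_pair_eq] at this

lemma le_rpow_inv {y : ℝ} (hy : 0 ≤ y) {m : ℕ} (hm : m ≠ 0) {x : ℝ}
    (hx : y ^ m ≤ x) : y ≤ x ^ (1 / (m:ℝ)) := by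
  have hx0 : (0:ℝ) ≤ y ^ m := pow_nonneg hy m
  have h1 : (y ^ m) ^ (1 / (m:ℝ)) ≤ x ^ (1 / (m:ℝ)) :=
    Real.rpow_le_rpow hx0 hx (by positivity)
  have h2 : (y ^ m) ^ (1 / (m:ℝ)) = y := by
    rw [← Real.rpow_natCast y m, ← Real.rpow_mul hy]
    rw [mul_one_div, div_self (by exact_mod_cast hm), Real.rpow_one]
  rwa [h2] at h1

set_option maxHeartbeats 1000000 in
lemma analytic (t : ℕ) (ht : 2 ≤ t) :
    ∃ n₀ : ℕ, ∀ n : ℕ, n₀ < n →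
      ∀ K : ℕ, K = ⌈(n:ℝ) ^ ((1:ℝ) - 1/(2*(t:ℝ)))⌉₊ →
      (t-1) * K.choose t < (n + K) * ((K*(K+1))/(n+K)).choose t
      ∧ 2*(K:ℝ) ≤ 10 * (n:ℝ)^((1:ℝ)-1/(2*(t:ℝ))) := by
  refine ⟨2^(2*t) + ((t-1)*8^t + 1)^2 + (4*t+4)^2, ?_⟩
  intro n hn K hK
  have hT2 : (2:ℝ) ≤ (t:ℝ) := by exact_mod_cast ht
  have hT0 : (0:ℝ) < (t:ℝ) := by linarith
  set T : ℝ := (t:ℝ) with hTdef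
  set e : ℝ := (1:ℝ) - 1/(2*T) with he
  set β : ℝ := (1:ℝ) - 1/T with hβ
  have he0 : (0:ℝ) < e := by
    rw [he]
    have : 1/(2*T) ≤ 1/4 := one_div_le_one_div_of_le (by norm_num) (by linarith)
    linarith
  have he1 : e ≤ 1 := by
    rw [he]
    have : (0:ℝ) < 1/(2*T) := by positivity
    linarith
  have hβhalf : (1:ℝ)/2 ≤ β := by
    rw [hβ]
    have : 1/T ≤ 1/2 := one_div_le_one_div_of_le (by norm_num) (by linarith)
    linarith
  have hn1 : 1 ≤ n := lt_of_le_of_lt (Nat.zero_le _) hn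
  have hx : (0:ℝ) < (n:ℝ) := by exact_mod_cast hn1
  have hx1 : (1:ℝ) ≤ (n:ℝ) := by exact_mod_cast hn1
  set x : ℝ := (n:ℝ) with hxdef
  -- basic K bounds
  have k0 : (1:ℝ) ≤ x^e := by
    calc (1:ℝ) = 1^e := (Real.one_rpow e).symm
    _ ≤ x^e := Real.rpow_le_rpow zero_le_one hx1 he0.le
  have k1 : x^e ≤ (K:ℝ) := by rw [hK]; exact Nat.le_ceil _
  have k2 : (K:ℝ) < x^e + 1 := by rw [hK]; exact Nat.ceil_lt_add_one (by positivity)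
  have k2' : (K:ℝ) ≤ 2 * x^e := by linarith
  -- n ≥ each summand
  have hnle := Nat.le_of_lt hn
  have hbig1 : (2:ℕ)^(2*t) ≤ n :=
    le_trans (le_trans (Nat.le_add_right _ _) (Nat.le_add_right _ _)) hnle
  have hbig2 : ((t-1)*8^t + 1)^2 ≤ n :=
    le_trans (le_trans (Nat.le_add_left _ _) (Nat.le_add_right _ _)) hnle
  have hbig3 : (4*t+4)^2 ≤ n := le_trans (Nat.le_add_left _ _) hnle
  -- x^(1/(2t)) ≥ 2
  have hhalf : (2:ℝ) ≤ x ^ (1/(2*T)) := by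
    have h1 : ((2:ℝ))^(2*t) ≤ x := by rw [hxdef]; exact_mod_cast hbig1
    have h2 := le_rpow_inv (by norm_num : (0:ℝ) ≤ 2) (by omega : 2*t ≠ 0) h1
    have h3 : (1:ℝ)/((2*t:ℕ):ℝ) = 1/(2*T) := by push_cast; rw [hTdef]
    rwa [h3] at h2
  -- K ≤ n
  have hxsplit : x^e * x^(1/(2*T)) = x := by
    rw [← Real.rpow_add hx]
    have : e + 1/(2*T) = 1 := by rw [he]; ring
    rw [this, Real.rpow_one]
  have hKx : (K:ℝ) ≤ x := by
    calc (K:ℝ) ≤ 2 * x^e := k2'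
    _ ≤ x^(1/(2*T)) * x^e := by
        apply mul_le_mul_of_nonneg_right hhalf (by positivity)
    _ = x := by rw [mul_comm]; exact hxsplit
  have hKn : K ≤ n := by
    have := hKx
    rw [hxdef] at this
    exact_mod_cast this
  -- M bounds
  have hM2x : ((n + K : ℕ):ℝ) ≤ 2 * x := by push_cast; linarith
  have hMx : x ≤ ((n + K : ℕ):ℝ) := by push_cast; linarith [Nat.cast_nonneg (α := ℝ) K]
  have hMpos : 0 < n + K := by omega
  -- a lower bound
  set a : ℕ := (K*(K+1))/(n+K) with ha
  have haM : (K:ℝ)*((K:ℝ)+1) < ((n+K:ℕ):ℝ) * ((a:ℝ)+1) := by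
    have h1 : K*(K+1) < (n+K) * (a+1) := by
      have h2 := Nat.div_add_mod (K*(K+1)) (n+K)
      have h3 := Nat.mod_lt (K*(K+1)) hMpos
      calc K*(K+1) = (n+K) * a + (K*(K+1)) % (n+K) := by rw [ha]; omega
      _ < (n+K) * a + (n+K) := by omega
      _ = (n+K) * (a+1) := by ring
    exact_mod_cast h1
  have h2e : x^e * x^e = x^β * x := by
    rw [← Real.rpow_add hx]
    rw [show x^β * x = x^β * x^(1:ℝ) by rw [Real.rpow_one]]
    rw [← Real.rpow_add hx]
    congr 1
    rw [he, hβ]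
    field_simp
    ring
  have hb : x^β/2 - 1 ≤ (a:ℝ) := by
    have h1 : x^β * x ≤ (K:ℝ)*((K:ℝ)+1) := by
      rw [← h2e]
      have : x^e ≤ (K:ℝ)+1 := by linarith
      exact mul_le_mul k1 this (by positivity) (by positivity)
    have h2 : x^β * x < ((n+K:ℕ):ℝ) * ((a:ℝ)+1) := lt_of_le_of_lt h1 haM
    have h3 : x^β * x ≤ (2*x) * ((a:ℝ)+1) := by
      have ha1 : (0:ℝ) ≤ (a:ℝ)+1 := by positivity
      exact le_trans h2.le (mul_le_mul_of_nonneg_right hM2x ha1)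
    have h4 : x^β ≤ 2*((a:ℝ)+1) := by
      have heq : (2*x) * ((a:ℝ)+1) = (2*((a:ℝ)+1)) * x := by ring
      have h3' : x^β * x ≤ (2*((a:ℝ)+1)) * x := by rw [← heq]; exact h3
      exact le_of_mul_le_mul_right h3' hx
    linarith
  -- x^(1/2) lower bounds
  have hsq : ((4*t+4:ℕ):ℝ) ≤ x^((1:ℝ)/2) := by
    apply le_rpow_inv (by positivity) (by norm_num : (2:ℕ) ≠ 0)
    · rw [hxdef]; exact_mod_cast hbig3
  have hW : (((t-1)*8^t + 1 : ℕ):ℝ) ≤ x^((1:ℝ)/2) := by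
    apply le_rpow_inv (by positivity) (by norm_num : (2:ℕ) ≠ 0)
    · rw [hxdef]; exact_mod_cast hbig2
  have hbhalfx : x^((1:ℝ)/2) ≤ x^β :=
    Real.rpow_le_rpow_of_exponent_le hx1 hβhalf
  have hxb4t : 4*T + 4 ≤ x^β := by
    have h1 : ((4*t+4:ℕ):ℝ) = 4*T+4 := by push_cast; rw [hTdef]
    calc 4*T+4 = ((4*t+4:ℕ):ℝ) := h1.symm
    _ ≤ x^((1:ℝ)/2) := hsq
    _ ≤ x^β := hbhalfx
  -- t ≤ a
  have hta : t ≤ a := by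
    have h1 : (T:ℝ) ≤ (a:ℝ) := by linarith
    rw [hTdef] at h1
    exact_mod_cast h1
  set q : ℕ := a + 1 - t with hq
  have hqcast : (q:ℝ) = (a:ℝ) + 1 - T := by
    rw [hq]
    push_cast [Nat.cast_sub (by omega : t ≤ a + 1)]
    rw [hTdef]
  have hq4 : x^β/4 ≤ (q:ℝ) := by
    rw [hqcast]; linarith
  -- main real inequality
  have hrpow_et : (x^e)^t = x^(e*T) := by
    rw [Real.rpow_mul hx.le, Real.rpow_natCast]
  have hrpow_bt : (x^β)^t = x^(β*T) := by
    rw [Real.rpow_mul hx.le, Real.rpow_natCast]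
  have hidet : e*T = T - 1/2 := by
    rw [he]; field_simp
  have hidbt : β*T = T - 1 := by
    rw [hβ]; field_simp
  have hsplit1 : x^(T:ℝ) = x^(T-1/2) * x^((1:ℝ)/2) := by
    rw [← Real.rpow_add hx]
    congr 1
    ring
  have hsplit2 : x * x^(T-1) = x^(T:ℝ) := by
    rw [show x * x^(T-1) = x^(1:ℝ) * x^(T-1) by rw [Real.rpow_one]]
    rw [← Real.rpow_add hx]
    congr 1
    ring
  have hcast_t1 : ((t-1:ℕ):ℝ) = T - 1 := by
    push_cast [Nat.cast_sub (by omega : 1 ≤ t)]; rw [hTdef]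
  have h8t : (T-1) * 2^t * 4^t + 1 ≤ x^((1:ℝ)/2) := by
    have : (((t-1)*8^t + 1 : ℕ):ℝ) = (T-1) * 8^t + 1 := by
      push_cast [Nat.cast_sub (by omega : 1 ≤ t)]; rw [hTdef]
    rw [this] at hW
    have h8 : ((8:ℝ))^t = 2^t * 4^t := by
      rw [← mul_pow]; norm_num
    calc (T-1) * 2^t * 4^t + 1 = (T-1) * 8^t + 1 := by rw [h8]; ring
    _ ≤ x^((1:ℝ)/2) := hW
  have hmainR : ((t-1:ℕ):ℝ) * (K:ℝ)^t < ((n+K:ℕ):ℝ) * (q:ℝ)^t := by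
    have hKt : (K:ℝ)^t ≤ 2^t * x^(e*T) := by
      calc (K:ℝ)^t ≤ (2*x^e)^t := by
            apply pow_le_pow_left₀ (by positivity) k2'
      _ = 2^t * (x^e)^t := mul_pow _ _ _
      _ = 2^t * x^(e*T) := by rw [hrpow_et]
    have hqt : x^(β*T) / 4^t ≤ (q:ℝ)^t := by
      calc x^(β*T)/4^t = (x^β)^t / 4^t := by rw [hrpow_bt]
      _ = (x^β/4)^t := by rw [div_pow]
      _ ≤ (q:ℝ)^t := by
          apply pow_le_pow_left₀ (by positivity) hq4
    have hT12 : (0:ℝ) < x^(T - 1/2) := Real.rpow_pos_of_pos hx _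
    have hlhs : ((t-1:ℕ):ℝ) * (K:ℝ)^t ≤ (T-1) * 2^t * x^(T-1/2) := by
      rw [hcast_t1, ← hidet]
      have hT1 : (0:ℝ) ≤ T - 1 := by linarith
      calc (T-1) * (K:ℝ)^t ≤ (T-1) * (2^t * x^(e*T)) := mul_le_mul_of_nonneg_left hKt hT1
      _ = (T-1) * 2^t * x^(e*T) := by ring
    have hrhs : x^(T-1/2) * x^((1:ℝ)/2) / 4^t ≤ ((n+K:ℕ):ℝ) * (q:ℝ)^t := by
      calc x^(T-1/2) * x^((1:ℝ)/2) / 4^t = x^(T:ℝ)/4^t := by rw [← hsplit1]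
      _ = x * x^(T-1) / 4^t := by rw [hsplit2]
      _ = x * (x^(β*T)/4^t) := by rw [hidbt]; ring
      _ ≤ ((n+K:ℕ):ℝ) * (q:ℝ)^t := by
          apply mul_le_mul hMx hqt (by positivity) (by positivity)
    have hmid : (T-1) * 2^t * x^(T-1/2) < x^(T-1/2) * x^((1:ℝ)/2) / 4^t := by
      rw [lt_div_iff₀ (by positivity : (0:ℝ) < (4:ℝ)^t)]
      have h0 : (T-1) * 2^t * 4^t < x^((1:ℝ)/2) := by linarith
      have h1 := mul_lt_mul_of_pos_left h0 hT12
      calc (T-1) * 2^t * x^(T-1/2) * 4^t = x^(T-1/2) * ((T-1)*2^t*4^t) := by ring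
      _ < x^(T-1/2) * x^((1:ℝ)/2) := h1
    linarith
  -- to natural numbers
  have hmainN : (t-1) * K^t < (n+K) * q^t := by exact_mod_cast hmainR
  constructor
  · -- descend to choose
    have hc1 : (t-1) * K.choose t * t.factorial ≤ (t-1) * K^t := by
      calc (t-1) * K.choose t * t.factorial = (t-1) * (t.factorial * K.choose t) := by ring
      _ = (t-1) * K.descFactorial t := by rw [Nat.descFactorial_eq_factorial_mul_choose]
      _ ≤ (t-1) * K^t := Nat.mul_le_mul_left _ (Nat.descFactorial_le_pow _ _)
    have hc2 : (n+K) * q^t ≤ (n+K) * a.choose t * t.factorial := by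
      have := Nat.pow_sub_le_descFactorial a t
      calc (n+K) * q^t ≤ (n+K) * a.descFactorial t := by
            apply Nat.mul_le_mul_left
            rw [hq]
            exact Nat.pow_sub_le_descFactorial a t
      _ = (n+K) * (t.factorial * a.choose t) := by rw [Nat.descFactorial_eq_factorial_mul_choose]
      _ = (n+K) * a.choose t * t.factorial := by ring
    have h5 : (t-1) * K.choose t * t.factorial < (n+K) * a.choose t * t.factorial := by
      calc (t-1) * K.choose t * t.factorial ≤ (t-1) * K^t := hc1
      _ < (n+K) * q^t := hmainN
      _ ≤ (n+K) * a.choose t * t.factorial := hc2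
    exact Nat.lt_of_mul_lt_mul_right h5
  · -- size bound
    have : (2:ℝ) * K ≤ 4 * x^e := by linarith
    have h10 : (4:ℝ) * x^e ≤ 10 * x^e := by linarith [k0]
    calc (2:ℝ) * K ≤ 4 * x^e := this
    _ ≤ 10 * x^e := h10
    _ = 10 * (n:ℝ)^((1:ℝ) - 1/(2*(t:ℝ))) := by rw [he, hxdef, hTdef]

/-- for t ≥ 2 and all sufficiently large n,
IR(K_{t,t}, K_{1,n}) ≤ n + 10·n^{1 − 1/(2t)}. -/
theorem IR_Ktt_upper (t : ℕ) (ht : 2 ≤ t) :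
    ∃ n₀ : ℕ, ∀ n : ℕ, n₀ < n →
      (IR (completeBipartiteGraph (Fin t) (Fin t)) (StarGraph n) : ℝ)
        ≤ n + 10 * (n : ℝ) ^ ((1 : ℝ) - 1 / (2 * (t : ℝ))) := by
  obtain ⟨n₀, hn₀⟩ := analytic t ht
  refine ⟨n₀, ?_⟩
  intro n hn
  obtain ⟨hkey, hsize⟩ := hn₀ n hn _ rfl
  have harr := arrows_main t _ n ht hkey
  have hIR := IR_le_card _ _ _ harr
  rw [Fintype.card_sum, Fintype.card_fin, Fintype.card_fin] at hIR
  have hIRr : (IR (completeBipartiteGraph (Fin t) (Fin t)) (StarGraph n) : ℝ)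
      ≤ ((⌈(n:ℝ) ^ ((1:ℝ) - 1/(2*(t:ℝ)))⌉₊ + (n + ⌈(n:ℝ) ^ ((1:ℝ) - 1/(2*(t:ℝ)))⌉₊) : ℕ) : ℝ) := by
    exact_mod_cast hIR
  push_cast at hIRr
  linarith [hsize]
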